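/- Let M be a module, f ∈ End(M), and g ∈ End(M) such that f − fgf ∈ Jac(End(M)) and Im(f − fgf) is small in M. Then Im(f) + Im(1 − fg) = M and Im(f) ∩ Im(1 − fg) ⊆ Im(f − fgf); consequently Im(1 − fg) is a weak supplement of Im(f) in M. -/

import Mathlib

/-- A submodule `N` of `M` is small (superfluous) in `M`. -/
def IsSmallSubmodule {R M : Type*} [Ring R] [AddCommGroup M] [Module R M]
    (N : Submodule R M) : Prop :=
  ∀ K : Submodule R M, N ⊔ K = ⊤ → K = ⊤

/-- `L` is a weak supplement of `N` in `M`. -/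
def IsWeakSupplement {R M : Type*} [Ring R] [AddCommGroup M] [Module R M]
    (L N : Submodule R M) : Prop :=
  N ⊔ L = ⊤ ∧ IsSmallSubmodule (N ⊓ L)

/-- A module is weakly supplemented if every submodule has a weak supplement. -/
def IsWeaklySupplemented (R M : Type*) [Ring R] [AddCommGroup M] [Module R M] : Prop :=
  ∀ N : Submodule R M, ∃ L : Submodule R M, IsWeakSupplement L N

/-- A left ideal is left t-nilpotent if every sequence in it has a vanishing
initial left product `a 0 * a 1 * ⋯ * a (n-1) = 0`. -/
def IsLeftTNilpotent {R : Type*} [Ring R] (I : Ideal R) : Prop :=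
  ∀ a : ℕ → R, (∀ i, a i ∈ I) → ∃ n : ℕ, ((List.range n).map a).prod = 0

/-- A ring is semilocal if it is semisimple modulo its Jacobson radical. -/
def IsSemilocalRing (R : Type*) [Ring R] : Prop :=
  IsSemisimpleModule R (R ⧸ (⊥ : Ideal R).jacobson)

/-- A ring is left perfect iff it is semilocal with left t-nilpotent Jacobson radical. -/
def IsLeftPerfectRing (R : Type*) [Ring R] : Prop :=
  IsSemilocalRing R ∧ IsLeftTNilpotent (⊥ : Ideal R).jacobson

/-- If `f - fgf ∈ Jac(End M)` and `Im(f - fgf)` is small in `M`, then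
`Im f + Im(1 - fg) = M`, `Im f ∩ Im(1 - fg) ⊆ Im(f - fgf)`, and consequently
`Im(1 - fg)` is a weak supplement of `Im f` in `M`. -/
theorem stmt9 {R M : Type*} [Ring R] [AddCommGroup M] [Module R M]
    (f g : Module.End R M)
    (h₁ : f - f * g * f ∈ (⊥ : Ideal (Module.End R M)).jacobson)
    (h₂ : IsSmallSubmodule (LinearMap.range (f - f * g * f))) :
    LinearMap.range f ⊔ LinearMap.range (1 - f * g) = ⊤ ∧
    LinearMap.range f ⊓ LinearMap.range (1 - f * g) ≤ LinearMap.range (f - f * g * f) ∧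
    IsWeakSupplement (LinearMap.range (1 - f * g)) (LinearMap.range f) := by
  have hsup : LinearMap.range f ⊔ LinearMap.range (1 - f * g) = ⊤ := by
    rw [eq_top_iff]
    intro m _
    have hm : m = f (g m) + (1 - f * g) m := by
      simp [LinearMap.sub_apply, Module.End.mul_apply]
    rw [hm]
    exact Submodule.add_mem_sup ⟨g m, rfl⟩ ⟨m, rfl⟩
  have hinf : LinearMap.range f ⊓ LinearMap.range (1 - f * g) ≤
      LinearMap.range (f - f * g * f) := by
    rintro x ⟨⟨a, ha⟩, ⟨b, hb⟩⟩
    refine ⟨a + g b, ?_⟩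
    have hb' : b - f (g b) = x := by
      simpa [LinearMap.sub_apply, Module.End.mul_apply] using hb
    have hfb : f (g b) = b - x := by rw [← hb']; abel
    simp only [LinearMap.sub_apply, Module.End.mul_apply, map_add, map_sub, ha, hfb]
    abel
  refine ⟨hsup, hinf, hsup, fun K hK => h₂ K ?_⟩
  rw [eq_top_iff, ← hK]
  exact sup_le_sup_right hinf K
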